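/- Let F be the finite field with 25 elements. The number of rational points (including the point at infinity) of the elliptic curve over F with Weierstrass equation y² = x³ + 3x is divisible by 5. -/

import Mathlib

instance : Fact (Nat.Prime 5) := ⟨by norm_num⟩

/-- The curve `y² = x³ + 3x` over the field `𝔽₂₅` with 25 elements. -/
noncomputable def Ebar25 : WeierstrassCurve.Affine (GaloisField 5 2) :=
  { a₁ := 0, a₂ := 0, a₃ := 0, a₄ := 3, a₆ := 0 }

namespace Ebar25Aux

open WeierstrassCurve.Affine

abbrev F := GaloisField 5 2

noncomputable instance : DecidableEq F := Classical.decEq _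

lemma h5 : (5 : F) = 0 := by
  have := CharP.cast_eq_zero F 5
  exact_mod_cast this

lemma hP : Ebar25.Nonsingular 1 2 := by
  rw [nonsingular_iff, equation_iff]
  simp only [Ebar25]
  refine ⟨by ring, Or.inl fun h => one_ne_zero (α := F) ?_⟩
  linear_combination -h - h5

lemma hQ : Ebar25.Nonsingular 4 1 := by
  rw [nonsingular_iff, equation_iff]
  simp only [Ebar25]
  refine ⟨by linear_combination -15 * h5, Or.inl fun h => one_ne_zero (α := F) ?_⟩
  linear_combination -h - 10 * h5

lemma hR : Ebar25.Nonsingular 1 3 := by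
  rw [nonsingular_iff, equation_iff]
  simp only [Ebar25]
  refine ⟨by linear_combination h5, Or.inl fun h => one_ne_zero (α := F) ?_⟩
  linear_combination -h - h5

lemma some_eq_some {W : WeierstrassCurve.Affine F} {x₁ x₂ y₁ y₂ : F}
    {h₁ : W.Nonsingular x₁ y₁} {h₂ : W.Nonsingular x₂ y₂} (hx : x₁ = x₂) (hy : y₁ = y₂) :
    Point.some _ _ h₁ = Point.some _ _ h₂ := by
  subst hx; subst hy; rfl

lemma hy12 : (2 : F) ≠ Ebar25.negY 1 2 := by
  simp only [Ebar25, negY]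
  intro h
  exact one_ne_zero (α := F) (by linear_combination 4 * h - 3 * h5)

lemma hy41 : (1 : F) ≠ Ebar25.negY 4 1 := by
  simp only [Ebar25, negY]
  intro h
  exact one_ne_zero (α := F) (by linear_combination 3 * h - h5)

lemma hs1 : Ebar25.slope 1 1 2 2 = 4 := by
  rw [slope_of_Y_ne rfl hy12]
  simp only [Ebar25, negY]
  rw [div_eq_iff]
  · linear_combination -2 * h5
  · intro h
    exact one_ne_zero (α := F) (by linear_combination 4 * h - 3 * h5)

lemma hs2 : Ebar25.slope 4 4 1 1 = 3 := by
  rw [slope_of_Y_ne rfl hy41]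
  simp only [Ebar25, negY]
  rw [div_eq_iff]
  · linear_combination 9 * h5
  · intro h
    exact one_ne_zero (α := F) (by linear_combination 3 * h - h5)

noncomputable def P : Ebar25.Point := Point.some _ _ hP

lemma e1 : P + P = Point.some _ _ hQ := by
  rw [P, Point.add_self_of_Y_ne hy12]
  refine some_eq_some ?_ ?_
  · rw [addX, hs1]
    simp only [Ebar25]
    linear_combination 2 * h5
  · rw [addY, negAddY, addX, hs1]
    simp only [Ebar25, negY]
    linear_combination -11 * h5

lemma e2 : Point.some _ _ hQ + Point.some _ _ hQ = Point.some _ _ hR := by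
  rw [Point.add_self_of_Y_ne hy41]
  refine some_eq_some ?_ ?_
  · rw [addX, hs2]
    simp only [Ebar25]
    linear_combination 0 * h5
  · rw [addY, negAddY, addX, hs2]
    simp only [Ebar25, negY]
    linear_combination h5

lemma e3 : Point.some _ _ hR + P = 0 := by
  rw [P]
  refine Point.add_of_Y_eq rfl ?_
  simp only [Ebar25, negY]
  linear_combination h5

lemma h5P : (5 : ℕ) • P = 0 := by
  have h2 : (2 : ℕ) • P = Point.some _ _ hQ := by rw [two_smul]; exact e1
  have h4 : (4 : ℕ) • P = Point.some _ _ hR := by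
    have : (4 : ℕ) • P = (2 : ℕ) • ((2 : ℕ) • P) := by rw [← mul_smul]; norm_num
    rw [this, h2, two_smul]; exact e2
  have h5' : (5 : ℕ) • P = (4 : ℕ) • P + (1 : ℕ) • P := by rw [← add_smul]
  rw [h5', h4, one_smul]
  exact e3

lemma hPne : P ≠ 0 := by
  rw [P]
  exact fun h => by cases h

instance : Finite Ebar25.Point := by
  classical
  apply Finite.of_injective (fun p : Ebar25.Point =>
    match p with
    | Point.zero => ((0, 0, true) : F × F × Bool)
    | @Point.some _ _ _ x y _ => (x, y, false))
  rintro (_ | _) (_ | _) h <;> simp_all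

end Ebar25Aux

/-- Example 2.5: the number of rational points (including the point at infinity) of the elliptic
curve `y² = x³ + 3x` over the field with 25 elements is divisible by 5. -/
theorem stmt_13 : 5 ∣ Nat.card Ebar25.Point := by
  have hdvd : addOrderOf Ebar25Aux.P ∣ 5 := addOrderOf_dvd_of_nsmul_eq_zero Ebar25Aux.h5P
  have h1 : addOrderOf Ebar25Aux.P ≠ 1 := by
    intro h
    exact Ebar25Aux.hPne (AddMonoid.addOrderOf_eq_one_iff.mp h)
  have heq : addOrderOf Ebar25Aux.P = 5 := by
    rcases (Nat.prime_five.eq_one_or_self_of_dvd _ hdvd) with h | h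
    · exact absurd h h1
    · exact h
  have := addOrderOf_dvd_natCard Ebar25Aux.P
  rwa [heq] at this
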